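/- arXiv:2506.04487 — 2 statements merged into one kernel-verified Lean document; each statement's English description precedes it below -/
import Mathlib

section
/- Descent inequality for ⊥Grad: if ∇L is k-Lipschitz and θ' = θ - η·g with g the orthogonalized gradient at θ ≠ 0, then L(θ') ≤ L(θ) - η(1 - ηk/2)·‖g‖². -/
open scoped RealInnerProductSpace

lemma descent_quad_bound (p : ℕ) (L : EuclideanSpace ℝ (Fin p) → ℝ)
    (hL : Differentiable ℝ L) (k : ℝ) (hk : 0 ≤ k)
    (hLip : ∀ x y : EuclideanSpace ℝ (Fin p),
      ‖gradient L x - gradient L y‖ ≤ k * ‖x - y‖)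
    (x v : EuclideanSpace ℝ (Fin p)) :
    L (x + v) ≤ L x + ⟪gradient L x, v⟫ + k / 2 * ‖v‖ ^ 2 := by
  have hgradcont : Continuous (gradient L) := by
    have : LipschitzWith ⟨k, hk⟩ (gradient L) := by
      apply LipschitzWith.of_dist_le_mul
      intro a b
      rw [dist_eq_norm, dist_eq_norm]; exact hLip a b
    exact this.continuous
  have hderiv : ∀ t : ℝ, HasDerivAt (fun t : ℝ => L (x + t • v))
      ⟪gradient L (x + t • v), v⟫ t := by
    intro t
    have h1 : HasDerivAt (fun t : ℝ => x + t • v) v t := by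
      simpa using ((hasDerivAt_id t).smul_const v).const_add x
    have h2 := (hL (x + t • v)).hasGradientAt
    have h3 := (hasGradientAt_iff_hasFDerivAt.mp h2).comp_hasDerivAt t h1
    exact h3
  have hcont : Continuous fun t : ℝ => ⟪gradient L (x + t • v), v⟫ := by
    apply Continuous.inner
    · exact hgradcont.comp (by continuity)
    · exact continuous_const
  have hFTC : L (x + v) - L x = ∫ t in (0:ℝ)..1, ⟪gradient L (x + t • v), v⟫ := by
    have := intervalIntegral.integral_eq_sub_of_hasDerivAt
      (f := fun t : ℝ => L (x + t • v)) (a := (0:ℝ)) (b := 1)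
      (fun t _ => hderiv t) (hcont.intervalIntegrable 0 1)
    simp only [one_smul, zero_smul, add_zero] at this
    linarith [this]
  have hbound : ∀ t ∈ Set.Icc (0:ℝ) 1,
      ⟪gradient L (x + t • v), v⟫ ≤ ⟪gradient L x, v⟫ + k * t * ‖v‖ ^ 2 := by
    intro t ht
    have h1 : ⟪gradient L (x + t • v) - gradient L x, v⟫
        ≤ ‖gradient L (x + t • v) - gradient L x‖ * ‖v‖ :=
      real_inner_le_norm _ _
    have h2 : ‖gradient L (x + t • v) - gradient L x‖ ≤ k * (t * ‖v‖) := by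
      have := hLip (x + t • v) x
      simpa [norm_smul, abs_of_nonneg ht.1] using this
    have h3 : ⟪gradient L (x + t • v) - gradient L x, v⟫
        ≤ k * t * ‖v‖ ^ 2 := by
      calc ⟪gradient L (x + t • v) - gradient L x, v⟫
          ≤ ‖gradient L (x + t • v) - gradient L x‖ * ‖v‖ := h1
        _ ≤ k * (t * ‖v‖) * ‖v‖ := by
            apply mul_le_mul_of_nonneg_right h2 (norm_nonneg _)
        _ = k * t * ‖v‖ ^ 2 := by ring
    have h4 : ⟪gradient L (x + t • v), v⟫
        = ⟪gradient L x, v⟫ + ⟪gradient L (x + t • v) - gradient L x, v⟫ := by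
      rw [inner_sub_left]; ring
    linarith
  have hint : (∫ t in (0:ℝ)..1, ⟪gradient L (x + t • v), v⟫)
      ≤ ∫ t in (0:ℝ)..1, (⟪gradient L x, v⟫ + k * t * ‖v‖ ^ 2) := by
    apply intervalIntegral.integral_mono_on (by norm_num)
      (hcont.intervalIntegrable 0 1)
      ((by continuity : Continuous fun t : ℝ => ⟪gradient L x, v⟫ + k * t * ‖v‖ ^ 2).intervalIntegrable 0 1)
    exact hbound
  have hval : (∫ t in (0:ℝ)..1, (⟪gradient L x, v⟫ + k * t * ‖v‖ ^ 2))
      = ⟪gradient L x, v⟫ + k / 2 * ‖v‖ ^ 2 := by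
    have heq : (fun t : ℝ => ⟪gradient L x, v⟫ + k * t * ‖v‖ ^ 2)
        = fun t : ℝ => ⟪gradient L x, v⟫ + (k * ‖v‖ ^ 2) * t := by
      funext t; ring
    have hI : IntervalIntegrable (fun t : ℝ => (k * ‖v‖ ^ 2) * t)
        MeasureTheory.volume 0 1 :=
      (continuous_const.mul continuous_id').intervalIntegrable 0 1
    rw [heq, intervalIntegral.integral_add intervalIntegrable_const hI,
      intervalIntegral.integral_const,
      intervalIntegral.integral_const_mul, integral_id]
    norm_num; ring
  linarith [hFTC, hint, hval.le, hval.ge]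

theorem orthograd_descent_inequality (p : ℕ) (L : EuclideanSpace ℝ (Fin p) → ℝ)
    (hL : Differentiable ℝ L) (k : ℝ) (hk : 0 ≤ k)
    (hLip : ∀ x y : EuclideanSpace ℝ (Fin p),
      ‖gradient L x - gradient L y‖ ≤ k * ‖x - y‖)
    (η : ℝ) (hη : 0 < η) (θ : EuclideanSpace ℝ (Fin p)) (hθ : θ ≠ 0)
    (g θ' : EuclideanSpace ℝ (Fin p))
    (hg : g = gradient L θ - (⟪gradient L θ, θ⟫ / ‖θ‖ ^ 2) • θ)
    (hθ' : θ' = θ - η • g) :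
    L θ' ≤ L θ - η * (1 - η * k / 2) * ‖g‖ ^ 2 := by
  set G := gradient L θ with hG
  have hnθ : ‖θ‖ ^ 2 ≠ 0 := by
    simpa using pow_ne_zero 2 (norm_ne_zero_iff.mpr hθ)
  have hgθ : ⟪g, θ⟫ = 0 := by
    rw [hg, inner_sub_left, real_inner_smul_left, real_inner_self_eq_norm_sq]
    field_simp
    ring
  have hGg : ⟪G, g⟫ = ‖g‖ ^ 2 := by
    have : G = g + (⟪G, θ⟫ / ‖θ‖ ^ 2) • θ := by rw [hg]; abel
    have hθg : ⟪θ, g⟫ = 0 := by rw [real_inner_comm]; exact hgθ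
    rw [this, inner_add_left, real_inner_smul_left, hθg, mul_zero, add_zero,
      real_inner_self_eq_norm_sq]
  have key := descent_quad_bound p L hL k hk hLip θ (-(η • g))
  have hθ'' : θ' = θ + -(η • g) := by rw [hθ', sub_eq_add_neg]
  rw [← hθ''] at key
  have h1 : ⟪G, -(η • g)⟫ = -(η * ‖g‖ ^ 2) := by
    rw [inner_neg_right, real_inner_smul_right, hGg]
  have h2 : ‖-(η • g)‖ ^ 2 = η ^ 2 * ‖g‖ ^ 2 := by
    rw [norm_neg, norm_smul]
    simp [abs_of_pos hη, mul_pow]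
  rw [h1, h2] at key
  nlinarith [key]
end

section
/- If L is bounded below, ∇L is k-Lipschitz, and 0 < η < 1/k, then along the non-renormalized ⊥Grad trajectory θ_{n+1} = θ_n - η·g_n the series ∑ₙ ‖g_n‖² converges, and it is bounded by (L(θ₀) - inf L) / (η(1 - kη/2)). -/
open scoped RealInnerProductSpace

lemma descent_lemma {p : ℕ} (L : EuclideanSpace ℝ (Fin p) → ℝ)
    (hL : Differentiable ℝ L) (k : ℝ) (hk : 0 ≤ k)
    (hLip : ∀ x y : EuclideanSpace ℝ (Fin p),
      ‖gradient L x - gradient L y‖ ≤ k * ‖x - y‖)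
    (x v : EuclideanSpace ℝ (Fin p)) :
    L (x + v) ≤ L x + ⟪gradient L x, v⟫ + k / 2 * ‖v‖ ^ 2 := by
  have hφ : ∀ t : ℝ, HasDerivAt (fun t : ℝ => L (x + t • v))
      ⟪gradient L (x + t • v), v⟫ t := by
    intro t
    have h1 : HasDerivAt (fun t : ℝ => x + t • v) v t := by
      simpa using ((hasDerivAt_id t).smul_const v).const_add x
    have h2 : HasFDerivAt L ((InnerProductSpace.toDual ℝ _) (gradient L (x + t • v)))
        (x + t • v) := ((hL _).hasGradientAt).hasFDerivAt
    exact h2.comp_hasDerivAt t h1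
  set ψ : ℝ → ℝ := fun t => L (x + t • v) - t * ⟪gradient L x, v⟫ - k / 2 * t ^ 2 * ‖v‖ ^ 2
    with hψdef
  have hψ : ∀ t : ℝ, HasDerivAt ψ
      (⟪gradient L (x + t • v), v⟫ - ⟪gradient L x, v⟫ - k * t * ‖v‖ ^ 2) t := by
    intro t
    have ha : HasDerivAt (fun t : ℝ => t * ⟪gradient L x, v⟫) ⟪gradient L x, v⟫ t := by
      simpa using (hasDerivAt_id t).mul_const ⟪gradient L x, v⟫
    have hb : HasDerivAt (fun t : ℝ => k / 2 * t ^ 2 * ‖v‖ ^ 2) (k * t * ‖v‖ ^ 2) t := by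
      have := ((hasDerivAt_pow 2 t).const_mul (k / 2)).mul_const (‖v‖ ^ 2)
      refine this.congr_deriv ?_
      ring
    exact ((hφ t).sub ha).sub hb
  have hanti : AntitoneOn ψ (Set.Icc (0:ℝ) 1) := by
    apply antitoneOn_of_deriv_nonpos (convex_Icc 0 1)
    · exact fun t _ => (hψ t).continuousAt.continuousWithinAt
    · exact fun t _ => (hψ t).differentiableAt.differentiableWithinAt
    · intro t ht
      rw [interior_Icc] at ht
      rw [(hψ t).deriv]
      have h1 : ⟪gradient L (x + t • v) - gradient L x, v⟫ ≤
          ‖gradient L (x + t • v) - gradient L x‖ * ‖v‖ := real_inner_le_norm _ _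
      have h2 : ‖gradient L (x + t • v) - gradient L x‖ ≤ k * ‖t • v‖ := by
        simpa using hLip (x + t • v) x
      have h3 : ‖t • v‖ = t * ‖v‖ := by
        rw [norm_smul, Real.norm_eq_abs, abs_of_pos ht.1]
      have h4 : ⟪gradient L (x + t • v) - gradient L x, v⟫ =
          ⟪gradient L (x + t • v), v⟫ - ⟪gradient L x, v⟫ := inner_sub_left _ _ _
      rw [h3] at h2
      rw [h4] at h1
      nlinarith [mul_le_mul_of_nonneg_right h2 (norm_nonneg v)]
  have h01 := hanti (Set.left_mem_Icc.2 zero_le_one) (Set.right_mem_Icc.2 zero_le_one)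
    zero_le_one
  simp only [hψdef, zero_smul, add_zero, one_smul, zero_mul, one_pow, mul_one,
    ne_eq, OfNat.ofNat_ne_zero, not_false_eq_true, zero_pow, sub_zero] at h01
  linarith

theorem orthograd_gradient_square_summable (p : ℕ) (L : EuclideanSpace ℝ (Fin p) → ℝ)
    (hL : Differentiable ℝ L) (Linf : ℝ) (hbd : ∀ x, Linf ≤ L x)
    (k : ℝ) (hk : 0 < k)
    (hLip : ∀ x y : EuclideanSpace ℝ (Fin p),
      ‖gradient L x - gradient L y‖ ≤ k * ‖x - y‖)
    (η : ℝ) (hη : 0 < η) (hηk : η < 1 / k)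
    (θ g : ℕ → EuclideanSpace ℝ (Fin p))
    (hg0 : ∀ n, θ n = 0 → g n = 0)
    (hg : ∀ n, θ n ≠ 0 →
      g n = gradient L (θ n) - (⟪gradient L (θ n), θ n⟫ / ‖θ n‖ ^ 2) • θ n)
    (hrec : ∀ n, θ (n + 1) = θ n - η • g n) :
    Summable (fun n => ‖g n‖ ^ 2) ∧
      ∑' n, ‖g n‖ ^ 2 ≤ (L (θ 0) - Linf) / (η * (1 - k * η / 2)) := by
  have hkη : k * η < 1 := by
    rw [lt_div_iff₀ hk] at hηk; linarith
  set c : ℝ := η * (1 - k * η / 2) with hcdef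
  have hc : 0 < c := by
    apply mul_pos hη; linarith
  -- key inner product identity
  have hinner : ∀ n, ⟪gradient L (θ n), g n⟫ = ‖g n‖ ^ 2 := by
    intro n
    by_cases hθ : θ n = 0
    · simp [hg0 n hθ]
    · rw [hg n hθ]
      have ht : ‖θ n‖ ≠ 0 := norm_ne_zero_iff.2 hθ
      set G := gradient L (θ n) with hG
      set t := θ n with htt
      set r : ℝ := ⟪G, t⟫ / ‖t‖ ^ 2 with hr
      have ht2 : ‖t‖ ^ 2 ≠ 0 := pow_ne_zero 2 ht
      have hrb : r * ‖t‖ ^ 2 = ⟪G, t⟫ := div_mul_cancel₀ _ ht2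
      have hb : ⟪t, t⟫ = ‖t‖ ^ 2 := real_inner_self_eq_norm_sq t
      rw [← real_inner_self_eq_norm_sq]
      simp only [inner_sub_left, inner_sub_right, real_inner_smul_left, real_inner_smul_right]
      simp only [real_inner_comm t G, hb]
      have h6 : r * (r * ‖t‖ ^ 2) = r * ⟪G, t⟫ := by rw [hrb]
      have h8 : r * ⟪t, G⟫ = r * ⟪G, t⟫ := by rw [real_inner_comm t G]
      linarith
  -- descent step
  have hdesc : ∀ n, L (θ (n + 1)) ≤ L (θ n) - c * ‖g n‖ ^ 2 := by
    intro n
    have := descent_lemma L hL k hk.le hLip (θ n) (-(η • g n))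
    rw [← sub_eq_add_neg, ← hrec n] at this
    have h1 : ⟪gradient L (θ n), -(η • g n)⟫ = -(η * ‖g n‖ ^ 2) := by
      rw [inner_neg_right, real_inner_smul_right, hinner n]
    have h2 : ‖-(η • g n)‖ ^ 2 = η ^ 2 * ‖g n‖ ^ 2 := by
      rw [norm_neg, norm_smul, Real.norm_eq_abs, abs_of_pos hη, mul_pow]
    rw [h1, h2] at this
    rw [hcdef]
    nlinarith
  have hpart : ∀ N, ∑ i ∈ Finset.range N, c * ‖g i‖ ^ 2 ≤ L (θ 0) - L (θ N) := by
    intro N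
    induction N with
    | zero => simp
    | succ N ih =>
      rw [Finset.sum_range_succ]
      have := hdesc N
      linarith
  have hbound : ∀ N, ∑ i ∈ Finset.range N, ‖g i‖ ^ 2 ≤ (L (θ 0) - Linf) / c := by
    intro N
    rw [le_div_iff₀ hc, Finset.sum_mul]
    have h1 : ∑ i ∈ Finset.range N, ‖g i‖ ^ 2 * c = ∑ i ∈ Finset.range N, c * ‖g i‖ ^ 2 := by
      apply Finset.sum_congr rfl; intros; ring
    rw [h1]
    have := hpart N
    have := hbd (θ N)
    linarith
  have hnonneg : ∀ n, (0:ℝ) ≤ ‖g n‖ ^ 2 := fun n => sq_nonneg _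
  exact ⟨summable_of_sum_range_le hnonneg hbound,
    Real.tsum_le_of_sum_range_le hnonneg hbound⟩
end
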